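/- arXiv:2101.10101 — 2 statements merged into one kernel-verified Lean document; each statement's English description precedes it below -/
import Mathlib

section
/- Let p > 2 and M > 0, and let γ ∈ W^{2,p}(ℝ/ℤ, ℝⁿ) be a closed curve parametrised by arc-length with ‖γ'‖_{W^{1,p}} ≤ M. Then there exists ε = ε(p, M) > 0 such that the mollified curve γ_ε has nowhere-vanishing derivative and the unit tangent τ = γ'_ε/|γ'_ε| satisfies ‖τ − γ'‖_{L^∞} ≤ 1/4. -/
open MeasureTheory Real Filter Set
open scoped ENNReal

noncomputable section

/-- Euclidean space `ℝⁿ`. -/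
abbrev En (n : ℕ) := EuclideanSpace ℝ (Fin n)

/-- The real inner product on `ℝⁿ`. -/
def rinner {n : ℕ} (x y : En n) : ℝ := inner ℝ x y

/-- Orthogonal projection of `w` onto the line spanned by `v`: `P^T_v w`. -/
def projTan {n : ℕ} (v w : En n) : En n := (rinner w v / ‖v‖ ^ 2) • v

/-- Orthogonal projection of `w` onto the orthogonal complement of `v`: `P^⊥_v w`. -/
def projPerp {n : ℕ} (v w : En n) : En n := w - projTan v w

/-- The sup (`L^∞`) norm of a function. -/
def supNorm {n : ℕ} (f : ℝ → En n) : ℝ := ⨆ x : ℝ, ‖f x‖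

/-- The `C^{1/2}`-Hölder seminorm of a function. -/
def holderHalfNorm {n : ℕ} (f : ℝ → En n) : ℝ :=
  ⨆ q : ℝ × ℝ, if q.1 = q.2 then 0 else ‖f q.1 - f q.2‖ / |q.1 - q.2| ^ ((1 : ℝ) / 2)

/-- Mollification `γ * η_ε` with the rescaled mollifier `η_ε(y) = ε⁻¹ η(y/ε)`. -/
def mollify {n : ℕ} (η : ℝ → ℝ) (ε : ℝ) (γ : ℝ → En n) (x : ℝ) : En n :=
  ∫ y : ℝ, (ε⁻¹ * η (y / ε)) • γ (x - y)

/-- `η` is a mollifier. -/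
structure IsMollifier (η : ℝ → ℝ) : Prop where
  smooth : ContDiff ℝ (⊤ : ℕ∞) η
  nonneg : ∀ x, 0 ≤ η x
  vanish : ∀ x, 1 ≤ |x| → η x = 0
  integral_one : (∫ x : ℝ, η x) = 1

/-- `f` is a closed curve of class `W^{2,p}(ℝ/Lℤ, ℝⁿ)` with (weak) second derivative `f₂`:
`f` is `C¹`, `L`-periodic, `deriv f` is an indefinite integral of `f₂`, and `f₂ ∈ L^p`. -/
structure IsW2p {n : ℕ} (p L : ℝ) (f f₂ : ℝ → En n) : Prop where
  periodic : Function.Periodic f L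
  contDiff : ContDiff ℝ 1 f
  ftc : ∀ x, deriv f x = deriv f 0 + ∫ y in (0:ℝ)..x, f₂ y
  memLp : MemLp f₂ (ENNReal.ofReal p) (volume.restrict (Set.Ioc (0:ℝ) L))

/-- `f` is a closed curve of class `W^{3,p}(ℝ/Lℤ, ℝⁿ)` with second derivative `f₂` and third
derivative `f₃`. -/
structure IsW3p {n : ℕ} (p L : ℝ) (f f₂ f₃ : ℝ → En n) : Prop where
  base : IsW2p p L f f₂
  ftc2 : ∀ x, f₂ x = f₂ 0 + ∫ y in (0:ℝ)..x, f₃ y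
  memLp : MemLp f₃ (ENNReal.ofReal p) (volume.restrict (Set.Ioc (0:ℝ) L))

/-- A curve is parametrised by arc-length when its derivative has unit length. -/
def ArcLength {n : ℕ} (f : ℝ → En n) : Prop := ∀ x, ‖deriv f x‖ = 1

/-- `L^p`-norm over one period. -/
def lpNorm {n : ℕ} (p L : ℝ) (f : ℝ → En n) : ℝ :=
  (∫ x in (0:ℝ)..L, ‖f x‖ ^ p) ^ (1 / p)

/-- `L²`-norm over one period. -/
def l2Norm {n : ℕ} (L : ℝ) (f : ℝ → En n) : ℝ :=
  (∫ x in (0:ℝ)..L, ‖f x‖ ^ 2) ^ (1 / (2:ℝ))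

/-- `W^{1,p}`-norm of `f` with derivative `f'` over one period. -/
def w1pNormD {n : ℕ} (p L : ℝ) (f f' : ℝ → En n) : ℝ :=
  (∫ x in (0:ℝ)..L, (‖f x‖ ^ p + ‖f' x‖ ^ p)) ^ (1 / p)

/-- `W^{2,p}`-norm of `f` with derivatives `f'`, `f₂` over one period. -/
def w2pNormD {n : ℕ} (p L : ℝ) (f f' f₂ : ℝ → En n) : ℝ :=
  (∫ x in (0:ℝ)..L, (‖f x‖ ^ p + ‖f' x‖ ^ p + ‖f₂ x‖ ^ p)) ^ (1 / p)

/-- `C¹`-norm. -/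
def c1Norm {n : ℕ} (f : ℝ → En n) : ℝ := supNorm f + supNorm (deriv f)

/-- `τ` is a unit quasi-tangent to the curve `g` (relative to the mollifier `η`): it is the
unit tangent of a mollification `g_ε` of `g` and is `L^∞`-close to `g'`. -/
def IsQuasiTangent {n : ℕ} (η : ℝ → ℝ) (g τ : ℝ → En n) : Prop :=
  ∃ ε > 0, (∀ x, deriv (mollify η ε g) x ≠ 0) ∧
    (∀ x, τ x = ‖deriv (mollify η ε g) x‖⁻¹ • deriv (mollify η ε g) x) ∧
    ∀ x, ‖τ x - deriv g x‖ ≤ 1 / 4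

/-- An (orientation preserving) reparametrisation of `ℝ/Lℤ`, written as a lift `σ : ℝ → ℝ`. -/
def IsReparam (L : ℝ) (σ : ℝ → ℝ) : Prop :=
  ContDiff ℝ 1 σ ∧ (∀ x, σ (x + L) = σ x + L) ∧ ∀ x, 0 < deriv σ x

/-- The curvature vector `κ = P^⊥_{g'}(g₂)/|g'|²` of a curve `g` with second derivative `g₂`. -/
def curvatureD {n : ℕ} (g g₂ : ℝ → En n) (x : ℝ) : En n :=
  (‖deriv g x‖ ^ 2)⁻¹ • projPerp (deriv g x) (g₂ x)

/-- The `p`-elastic energy `(1/p)∫ |κ|^p ds` of a closed curve over one period. -/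
def pElasticD {n : ℕ} (p L : ℝ) (g g₂ : ℝ → En n) : ℝ :=
  (1 / p) * ∫ x in (0:ℝ)..L, ‖curvatureD g g₂ x‖ ^ p * ‖deriv g x‖

/-- The energy `E(γ) = (1/p)∫ |κ|^p ds + λ ∫ ds`. -/
def energyD {n : ℕ} (p lam L : ℝ) (g g₂ : ℝ → En n) : ℝ :=
  pElasticD p L g g₂ + lam * ∫ x in (0:ℝ)..L, ‖deriv g x‖

/-- The unit tangent `∂_s g = g'/|g'|`. -/
def unitTangentD {n : ℕ} (g : ℝ → En n) (x : ℝ) : En n := ‖deriv g x‖⁻¹ • deriv g x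

/-- The arc-length derivative `∂_s ψ = ψ'/|g'|` of `ψ` (with data `ψ'`) along the curve `g`. -/
def arcDeriv {n : ℕ} (g ψ' : ℝ → En n) (x : ℝ) : En n := ‖deriv g x‖⁻¹ • ψ' x

/-- The second arc-length derivative
`∂²_s ψ = ψ''/|g'|² − ⟨g'/|g'|, g''⟩ ψ' /|g'|³` of `ψ` along the curve `g`. -/
def arcDeriv2 {n : ℕ} (g g₂ ψ' ψ₂ : ℝ → En n) (x : ℝ) : En n :=
  (‖deriv g x‖ ^ 2)⁻¹ • ψ₂ x - (rinner (deriv g x) (g₂ x) / ‖deriv g x‖ ^ 4) • ψ' x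

/-- The first variation of the curvature,
`δ_ψ κ = (∂²_s ψ)^⊥ − ⟨κ, ∂_s ψ⟩ ∂_s g − 2 ⟨∂_s g, ∂_s ψ⟩ κ`. -/
def deltaKappa {n : ℕ} (g g₂ ψ' ψ₂ : ℝ → En n) (x : ℝ) : En n :=
  projPerp (deriv g x) (arcDeriv2 g g₂ ψ' ψ₂ x)
    - rinner (curvatureD g g₂ x) (arcDeriv g ψ' x) • unitTangentD g x
    - (2 * rinner (unitTangentD g x) (arcDeriv g ψ' x)) • curvatureD g g₂ x

/-- The first variation of the `p`-elastic energy,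
`δ_ψ E^{(p)}(g) = ∫ |κ|^{p−2} ⟨κ, δ_ψ κ⟩ ds + (1/p)∫ |κ|^p ⟨∂_s g, ∂_s ψ⟩ ds`. -/
def firstVarPElastic {n : ℕ} (p L : ℝ) (g g₂ ψ' ψ₂ : ℝ → En n) : ℝ :=
  ∫ x in (0:ℝ)..L,
    (‖curvatureD g g₂ x‖ ^ (p - 2) * rinner (curvatureD g g₂ x) (deltaKappa g g₂ ψ' ψ₂ x)
      + (1 / p) * ‖curvatureD g g₂ x‖ ^ p * rinner (unitTangentD g x) (arcDeriv g ψ' x))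
      * ‖deriv g x‖

/-- The first variation of the full energy `E = E^{(p)} + λ Length`. -/
def firstVarEnergy {n : ℕ} (p lam L : ℝ) (g g₂ ψ' ψ₂ : ℝ → En n) : ℝ :=
  firstVarPElastic p L g g₂ ψ' ψ₂
    + lam * ∫ x in (0:ℝ)..L, rinner (unitTangentD g x) (arcDeriv g ψ' x) * ‖deriv g x‖

/-- The tubular neighbourhood map `H_{x₀}(x,v) = γ(x) + P^⊥_{τ(x)} v`. -/
def tubeMap {n : ℕ} (γ τ : ℝ → En n) (z : ℝ × En n) : En n := γ z.1 + projPerp (τ z.1) z.2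

/-- The domain `B_δ(x₀) × B_δ(0) ⊆ (ℝ/ℤ) × 𝒩_{x₀}` of the tubular neighbourhood map, where
`𝒩_{x₀} = {v : P^T_{τ(x₀)} v = 0}` is the approximate normal space. -/
def tubeDom {n : ℕ} (τ : ℝ → En n) (x₀ δ : ℝ) : Set (ℝ × En n) :=
  {z | |z.1 - x₀| < δ ∧ ‖z.2‖ < δ ∧ rinner z.2 (τ x₀) = 0}

/-- A perturbation of class `W^{2,p}(ℝ/Lℤ, ℝⁿ)`, bundled with its second derivative. -/
structure W2pPert (n : ℕ) (p L : ℝ) where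
  f : ℝ → En n
  f₂ : ℝ → En n
  isW2p : IsW2p p L f f₂

/-- Membership in the admissible class
`𝒱(μ,W) = {φ ∈ (W^{2,p})^⊥_τ : ‖φ‖_{L^∞} < 3μ, ‖φ'‖_{L^∞} < 3W}`. -/
def inV {n : ℕ} {p L : ℝ} (τ : ℝ → En n) (μ W : ℝ) (φ : W2pPert n p L) : Prop :=
  (∀ x, rinner (φ.f x) (τ x) = 0) ∧ supNorm φ.f < 3 * μ ∧ supNorm (deriv φ.f) < 3 * W

/-- The minimising movement functional
`ℱ_j(φ) = E(γ̃+φ) + (1/2h) ∫ |P^⊥_{γ_{t_j}'}(γ̃+φ−γ_{t_j})|² |γ_{t_j}'| dx`,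
where `γ_{t_j} = γ̃ + φprev`. -/
def mmFunctional {n : ℕ} (p lam L h : ℝ) (γt : ℝ → En n) (φprev φ : W2pPert n p L) : ℝ :=
  energyD p lam L (fun x => γt x + φ.f x) (fun x => deriv (deriv γt) x + φ.f₂ x)
    + (1 / (2 * h)) * ∫ x in (0:ℝ)..L,
        ‖projPerp (deriv γt x + deriv φprev.f x) (φ.f x - φprev.f x)‖ ^ 2
          * ‖deriv γt x + deriv φprev.f x‖

/-- The energy of the discrete-time curve `γ_{t_j} = γ̃ + φ_j`. -/
def discEnergy {n : ℕ} {p L : ℝ} (lam : ℝ) (γt : ℝ → En n) (φj : W2pPert n p L) : ℝ :=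
  energyD p lam L (fun x => γt x + φj.f x) (fun x => deriv (deriv γt) x + φj.f₂ x)

/-- `φ : ℕ → W2pPert` is a discrete-time solution of the minimising movement scheme with step
size `h`, initial datum `Φ`, up to time `T`. -/
def IsMMSol {n : ℕ} (p lam L h T : ℝ) (γt τ : ℝ → En n) (μ W : ℝ)
    (Φ : W2pPert n p L) (φ : ℕ → W2pPert n p L) : Prop :=
  φ 0 = Φ ∧ ∀ j : ℕ, ((j : ℝ) + 1) * h < T →
    inV τ μ W (φ (j + 1)) ∧
      ∀ ψ : W2pPert n p L, inV τ μ W ψ →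
        mmFunctional p lam L h γt (φ j) (φ (j + 1)) ≤ mmFunctional p lam L h γt (φ j) ψ

/-- The piecewise linear interpolation in time `φ^{(h)}` of a discrete family. -/
def interpPert {n : ℕ} {p L : ℝ} (h : ℝ) (φ : ℕ → W2pPert n p L) (t s : ℝ) : En n :=
  (φ ⌊t / h⌋₊).f s
    + ((t - (⌊t / h⌋₊ : ℝ) * h) / h) • ((φ (⌊t / h⌋₊ + 1)).f s - (φ ⌊t / h⌋₊).f s)

/-- The piecewise linear interpolation of the second derivatives of a discrete family. -/
def interpPert2 {n : ℕ} {p L : ℝ} (h : ℝ) (φ : ℕ → W2pPert n p L) (t s : ℝ) : En n :=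
  (φ ⌊t / h⌋₊).f₂ s
    + ((t - (⌊t / h⌋₊ : ℝ) * h) / h) • ((φ (⌊t / h⌋₊ + 1)).f₂ s - (φ ⌊t / h⌋₊).f₂ s)

/-- The full setting of the minimising movement scheme: an initial arc-length curve `Γ` of
length `L` and energy at most `E₀`, written as an approximate normal graph `Γ ∘ σ = γ̃ + Φ`
over a smooth arc-length curve `γ̃` with unit quasi-tangent `τ`, with `‖Φ‖_{L^∞} ≤ μ` and
`‖Φ'‖_{L^∞} ≤ W`. -/
structure MMSetup (n : ℕ) (p lam E₀ : ℝ) (η : ℝ → ℝ) where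
  L : ℝ
  hL : 0 < L
  Γ : ℝ → En n
  Γ₂ : ℝ → En n
  hΓ : IsW2p p L Γ Γ₂
  hArc : ArcLength Γ
  hE : energyD p lam L Γ Γ₂ ≤ E₀
  gref : ℝ → En n
  hsmooth : ContDiff ℝ (⊤ : ℕ∞) gref
  hper : Function.Periodic gref L
  harc : ArcLength gref
  τ : ℝ → En n
  hτ : IsQuasiTangent η gref τ
  σ : ℝ → ℝ
  hσ : IsReparam L σ
  Φ : W2pPert n p L
  μ : ℝ
  W : ℝ
  hμ : 0 < μ
  hW : 2 < W
  hdecomp : ∀ x, Γ (σ x) = gref x + Φ.f x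
  horth : ∀ x, rinner (Φ.f x) (τ x) = 0
  hΦμ : supNorm Φ.f ≤ μ
  hΦW : supNorm (deriv Φ.f) ≤ W

/-- The `L²`-in-time `W^{1,1}`-in-space norm of a time dependent family. -/
def l2w11 {n : ℕ} (T L : ℝ) (F : ℝ → ℝ → En n) : ℝ :=
  (∫ t in (0:ℝ)..T, (∫ s in (0:ℝ)..L, (‖F t s‖ + ‖deriv (F t) s‖)) ^ 2) ^ (1 / (2:ℝ))

/-- The `L²`-in-time `L^∞`-in-space norm of a time dependent family. -/
def l2linf {n : ℕ} (T : ℝ) (F : ℝ → ℝ → En n) : ℝ :=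
  (∫ t in (0:ℝ)..T, (supNorm (F t)) ^ 2) ^ (1 / (2:ℝ))

end


section StmtFourHelpers

variable {n : ℕ} {η : ℝ → ℝ} {ε p K : ℝ} {γ γ₂ : ℝ → En n}

lemma k_cont (hη : IsMollifier η) : Continuous (fun y => ε⁻¹ * η (y / ε)) :=
  continuous_const.mul (hη.smooth.continuous.comp (continuous_id.div_const ε))

lemma k_supp (hη : IsMollifier η) (hε : 0 < ε) :
    HasCompactSupport (fun y => ε⁻¹ * η (y / ε)) := by
  apply HasCompactSupport.intro (isCompact_Icc (a := -ε) (b := ε))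
  intro y hy
  have : 1 ≤ |y / ε| := by
    rw [abs_div, abs_of_pos hε, le_div_iff₀ hε, one_mul]
    have h' : ¬(-ε ≤ y ∧ y ≤ ε) := fun h => hy (Set.mem_Icc.mpr h)
    rcases not_and_or.mp h' with h | h
    · rw [abs_of_neg (by linarith [not_le.mp h])]; linarith [not_le.mp h]
    · rw [abs_of_pos (by linarith [not_le.mp h])]; linarith [not_le.mp h]
  simp [hη.vanish _ this]

lemma k_nonneg (hη : IsMollifier η) (hε : 0 < ε) (y : ℝ) : 0 ≤ ε⁻¹ * η (y / ε) :=
  mul_nonneg (inv_nonneg.mpr hε.le) (hη.nonneg _)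

lemma k_int_one (hη : IsMollifier η) (hε : 0 < ε) :
    (∫ y : ℝ, ε⁻¹ * η (y / ε)) = 1 := by
  rw [MeasureTheory.integral_const_mul, MeasureTheory.Measure.integral_comp_div η ε,
    hη.integral_one, abs_of_pos hε]
  simp [smul_eq_mul, inv_mul_cancel₀ hε.ne']

lemma k_integrable (hη : IsMollifier η) (hε : 0 < ε) :
    Integrable (fun y => ε⁻¹ * η (y / ε)) :=
  (k_cont hη).integrable_of_hasCompactSupport (k_supp hη hε)

lemma mollify_hasDerivAt (hη : IsMollifier η) (hε : 0 < ε) (hγ : ContDiff ℝ 1 γ)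
    (harc : ∀ x, ‖deriv γ x‖ = 1) (x : ℝ) :
    HasDerivAt (mollify η ε γ) (∫ y : ℝ, (ε⁻¹ * η (y / ε)) • deriv γ (x - y)) x := by
  set k := fun y => ε⁻¹ * η (y / ε) with hk
  have hkc : Continuous k := k_cont hη
  have hks : HasCompactSupport k := k_supp hη hε
  have hd := hasDerivAt_integral_of_dominated_loc_of_deriv_le (μ := volume)
      (F := fun x y => k y • γ (x - y)) (F' := fun x y => k y • deriv γ (x - y))
      (x₀ := x) (bound := fun y => ‖k y‖) (s := Metric.ball x 1) (Metric.ball_mem_nhds x zero_lt_one)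
      (Filter.Eventually.of_forall (fun x' =>
        ((hkc.smul ((hγ.continuous).comp (continuous_const.sub continuous_id))).aestronglyMeasurable)))
      (((hkc.smul ((hγ.continuous).comp (continuous_const.sub continuous_id)))).integrable_of_hasCompactSupport
        (hks.smul_right))
      ((hkc.smul ((hγ.continuous_deriv le_rfl).comp (continuous_const.sub continuous_id))).aestronglyMeasurable)
      (Filter.Eventually.of_forall (fun y => fun x' _ => by
        rw [norm_smul, harc, mul_one]))
      (hkc.norm.integrable_of_hasCompactSupport hks.norm)
      (Filter.Eventually.of_forall (fun y => fun x' _ => by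
        have h1 : HasDerivAt (fun t : ℝ => t - y) 1 x' := (hasDerivAt_id x').sub_const y
        have h2 : HasDerivAt γ (deriv γ (x' - y)) (x' - y) :=
          ((hγ.differentiable one_ne_zero) (x' - y)).hasDerivAt
        have := (h2.scomp x' h1).const_smul (k y)
        rw [one_smul] at this
        exact this))
  exact hd.2


lemma holder_step (hp : 2 < p) (hW : IsW2p p 1 γ γ₂) (hK : ∫ x in Set.Ioc (0:ℝ) 1, ‖γ₂ x‖ ^ p ≤ K)
    {a b : ℝ} (ha : 0 ≤ a) (hab : a ≤ b) (hb : b ≤ 1) :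
    ‖deriv γ b - deriv γ a‖ ≤ K ^ (1/p) * (b - a) ^ (1 - 1/p) := by
  have hp1 : (1:ℝ) < p := by linarith
  have hpne : ENNReal.ofReal p ≠ 0 := by
    simp [ENNReal.ofReal_eq_zero]; linarith
  -- integrability of γ₂ on Ioc 0 1
  haveI hfin : IsFiniteMeasure (volume.restrict (Set.Ioc (0:ℝ) 1)) :=
    ⟨by rw [Measure.restrict_apply_univ]; exact measure_Ioc_lt_top⟩
  have hmem := hW.memLp
  have hint1 : IntegrableOn γ₂ (Set.Ioc (0:ℝ) 1) :=
    memLp_one_iff_integrable.mp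
      (hmem.mono_exponent (by simpa using ENNReal.one_le_ofReal.mpr hp1.le))
  have hII : IntervalIntegrable γ₂ volume a b := by
    rw [intervalIntegrable_iff_integrableOn_Ioc_of_le hab]
    exact hint1.mono_set (Set.Ioc_subset_Ioc ha hb)
  have hII0b : IntervalIntegrable γ₂ volume 0 b := by
    rw [intervalIntegrable_iff_integrableOn_Ioc_of_le (le_trans ha hab)]
    exact hint1.mono_set (Set.Ioc_subset_Ioc le_rfl hb)
  have hII0a : IntervalIntegrable γ₂ volume 0 a := by
    rw [intervalIntegrable_iff_integrableOn_Ioc_of_le ha]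
    exact hint1.mono_set (Set.Ioc_subset_Ioc le_rfl (le_trans hab hb))
  have hdiff : deriv γ b - deriv γ a = ∫ y in a..b, γ₂ y := by
    rw [hW.ftc a, hW.ftc b]
    rw [← intervalIntegral.integral_interval_sub_left hII0b hII0a]
    abel
  rw [hdiff]
  calc ‖∫ y in a..b, γ₂ y‖ ≤ ∫ y in a..b, ‖γ₂ y‖ :=
        intervalIntegral.norm_integral_le_integral_norm hab
    _ ≤ K ^ (1/p) * (b - a) ^ (1 - 1/p) := by
        rw [intervalIntegral.integral_of_le hab]
        set q := p.conjExponent with hq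
        have hpq : p.HolderConjugate q := Real.HolderConjugate.conjExponent hp1
        haveI : IsFiniteMeasure (volume.restrict (Set.Ioc a b)) :=
          ⟨by rw [Measure.restrict_apply_univ]; exact measure_Ioc_lt_top⟩
        have hle : volume.restrict (Set.Ioc a b) ≤ volume.restrict (Set.Ioc (0:ℝ) 1) :=
          Measure.restrict_mono (Set.Ioc_subset_Ioc ha hb) le_rfl
        have hmem' : MemLp (fun y => ‖γ₂ y‖) (ENNReal.ofReal p)
            (volume.restrict (Set.Ioc a b)) := (hmem.norm).mono_measure hle
        have hmem1 : MemLp (fun _ : ℝ => (1:ℝ)) (ENNReal.ofReal q)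
            (volume.restrict (Set.Ioc a b)) := memLp_const 1
        have H := integral_mul_le_Lp_mul_Lq_of_nonneg hpq
          (Filter.Eventually.of_forall (fun y => norm_nonneg (γ₂ y)))
          (Filter.Eventually.of_forall (fun _ => zero_le_one)) hmem' hmem1
        simp only [mul_one] at H
        have h1q : (∫ _ in Set.Ioc a b, (1:ℝ) ^ q) ^ (1/q) = (b - a) ^ (1 - 1/p) := by
          have : ∀ y : ℝ, (1:ℝ) ^ q = 1 := fun _ => Real.one_rpow q
          rw [this 0]
          rw [MeasureTheory.setIntegral_const, smul_eq_mul, mul_one, Real.volume_real_Ioc,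
            max_eq_left (by linarith)]
          congr 1
          have := hpq.inv_add_inv_eq_inv.trans inv_one
          rw [one_div, one_div]
          linarith
        rw [h1q] at H
        refine H.trans ?_
        have hstep : ∫ y in Set.Ioc a b, ‖γ₂ y‖ ^ p ≤ K := by
          refine le_trans ?_ hK
          have hnn : 0 ≤ᵐ[volume.restrict (Set.Ioc (0:ℝ) 1)] fun y => ‖γ₂ y‖ ^ p :=
            Filter.Eventually.of_forall (fun y => Real.rpow_nonneg (norm_nonneg _) _)
          have hintp : IntegrableOn (fun y => ‖γ₂ y‖ ^ p) (Set.Ioc (0:ℝ) 1) := by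
            have := hmem.integrable_norm_rpow hpne (by simp)
            simpa [IntegrableOn, ENNReal.toReal_ofReal (by linarith : (0:ℝ) ≤ p)] using this
          exact MeasureTheory.setIntegral_mono_set hintp hnn
            (HasSubset.Subset.eventuallyLE (Set.Ioc_subset_Ioc ha hb))
        have hbase : 0 ≤ ∫ y in Set.Ioc a b, ‖γ₂ y‖ ^ p :=
          MeasureTheory.integral_nonneg (fun y => Real.rpow_nonneg (norm_nonneg _) _)
        exact mul_le_mul_of_nonneg_right
          (Real.rpow_le_rpow hbase hstep (one_div_nonneg.mpr (by linarith)))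
          (Real.rpow_nonneg (sub_nonneg.mpr hab) _)

end StmtFourHelpers

/-- Lemma 2.4: existence of the quasi-tangent parameter `ε = ε(p,M)`
such that the unit tangent `τ = γ'_ε/|γ'_ε|` of the mollification satisfies
`‖τ − γ'‖_{L^∞} ≤ 1/4`. -/
theorem stmt_4 {n : ℕ} (p M : ℝ) (hp : 2 < p) (hM : 0 < M)
    (η : ℝ → ℝ) (hη : IsMollifier η) :
    ∃ ε > (0:ℝ), ∀ (γ γ₂ : ℝ → En n), IsW2p p 1 γ γ₂ → ArcLength γ →
      w1pNormD p 1 (deriv γ) γ₂ ≤ M →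
      (∀ x, deriv (mollify η ε γ) x ≠ 0) ∧
      ∀ x, ‖‖deriv (mollify η ε γ) x‖⁻¹ • deriv (mollify η ε γ) x - deriv γ x‖
        ≤ 1 / 4 := by
  classical
  set t : ℝ := (16 * M)⁻¹ with ht
  have ht0 : 0 < t := by positivity
  refine ⟨min (1/2) (t ^ 2), lt_min (by norm_num) (by positivity), ?_⟩
  set ε : ℝ := min (1/2) (t ^ 2) with hε
  have hε0 : 0 < ε := lt_min (by norm_num) (by positivity)
  have hεhalf : ε ≤ 1/2 := min_le_left _ _
  have hε1 : ε ≤ 1 := by linarith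
  have hεsqrt : ε ^ ((1:ℝ)/2) ≤ t := by
    calc ε ^ ((1:ℝ)/2) ≤ (t ^ 2) ^ ((1:ℝ)/2) :=
          Real.rpow_le_rpow hε0.le (min_le_right _ _) (by norm_num)
      _ = t := by
          rw [← Real.rpow_natCast t 2, ← Real.rpow_mul ht0.le]
          norm_num
  intro γ γ₂ hW harc hM'
  have hp1 : (1:ℝ) < p := by linarith
  have hp0 : (0:ℝ) < p := by linarith
  set α : ℝ := 1 - 1/p with hα
  have hα0 : 0 ≤ α := by
    have : 1/p ≤ 1 := by rw [div_le_one hp0]; linarith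
    simp only [hα]; linarith
  have hαhalf : (1:ℝ)/2 ≤ α := by
    have : 1/p ≤ 1/2 := by
      rw [div_le_div_iff₀ hp0 (by norm_num)]; linarith
    simp only [hα]; linarith
  -- L^p bound on γ₂
  have hK : ∫ x in Set.Ioc (0:ℝ) 1, ‖γ₂ x‖ ^ p ≤ M ^ p := by
    have hpne : ENNReal.ofReal p ≠ 0 := by
      simp [ENNReal.ofReal_eq_zero]; linarith
    have hintp : IntegrableOn (fun y => ‖γ₂ y‖ ^ p) (Set.Ioc (0:ℝ) 1) := by
      have := hW.memLp.integrable_norm_rpow hpne (by simp)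
      simpa [IntegrableOn, ENNReal.toReal_ofReal hp0.le] using this
    have hX : (∫ x in (0:ℝ)..1, (‖deriv γ x‖ ^ p + ‖γ₂ x‖ ^ p))
        = 1 + ∫ x in Set.Ioc (0:ℝ) 1, ‖γ₂ x‖ ^ p := by
      rw [intervalIntegral.integral_of_le (by norm_num)]
      have : ∀ x : ℝ, ‖deriv γ x‖ ^ p + ‖γ₂ x‖ ^ p = 1 + ‖γ₂ x‖ ^ p := fun x => by
        rw [harc x, Real.one_rpow]
      simp only [this]
      rw [MeasureTheory.integral_add (integrable_const 1) hintp,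
        MeasureTheory.setIntegral_const, Real.volume_real_Ioc]
      norm_num
    have hXnn : 0 ≤ ∫ x in Set.Ioc (0:ℝ) 1, ‖γ₂ x‖ ^ p :=
      MeasureTheory.integral_nonneg (fun y => Real.rpow_nonneg (norm_nonneg _) _)
    have hMp : (∫ x in (0:ℝ)..1, (‖deriv γ x‖ ^ p + ‖γ₂ x‖ ^ p)) ≤ M ^ p := by
      have h1 := hM'
      rw [w1pNormD] at h1
      have hXnn' : 0 ≤ ∫ x in (0:ℝ)..1, (‖deriv γ x‖ ^ p + ‖γ₂ x‖ ^ p) := by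
        rw [hX]; linarith
      have := Real.rpow_le_rpow (Real.rpow_nonneg hXnn' _) h1 hp0.le
      rwa [← Real.rpow_mul hXnn', one_div_mul_cancel hp0.ne', Real.rpow_one] at this
    rw [hX] at hMp; linarith
  -- Hölder continuity of deriv γ within [0,1]
  have hHolder : ∀ a b : ℝ, 0 ≤ a → a ≤ b → b ≤ 1 →
      ‖deriv γ b - deriv γ a‖ ≤ M * (b - a) ^ α := by
    intro a b ha hab hb
    have := holder_step hp hW hK ha hab hb
    rwa [← Real.rpow_mul hM.le, mul_one_div_cancel hp0.ne', Real.rpow_one] at this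
  -- periodicity of deriv γ
  have hperD : Function.Periodic (deriv γ) 1 := by
    intro x
    have hfun : (fun y => γ (y + 1)) = γ := funext fun y => hW.periodic y
    calc deriv γ (x + 1) = deriv (fun y => γ (y + 1)) x := (deriv_comp_add_const γ 1 x).symm
      _ = deriv γ x := by rw [hfun]
  -- global Hölder-type estimate
  have hP : ∀ u v : ℝ, u ≤ v → v - u ≤ 1/2 →
      ‖deriv γ v - deriv γ u‖ ≤ 2 * M * (v - u) ^ α := by
    intro u v huv hlen
    set m : ℤ := ⌊u⌋ with hm
    have hu' : u - m = Int.fract u := rfl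
    have hfr0 : 0 ≤ u - (m:ℝ) := by rw [hu']; exact Int.fract_nonneg u
    have hfr1 : u - (m:ℝ) < 1 := by rw [hu']; exact Int.fract_lt_one u
    have hEu : deriv γ (u - (m:ℝ)) = deriv γ u := by
      have := hperD.sub_int_mul_eq (x := u) m
      simpa using this
    have hEv : deriv γ (v - (m:ℝ)) = deriv γ v := by
      have := hperD.sub_int_mul_eq (x := v) m
      simpa using this
    by_cases hcase : v - (m:ℝ) ≤ 1
    · rw [← hEu, ← hEv]
      have := hHolder (u - m) (v - m) hfr0 (by linarith) hcase
      have heq : v - (m:ℝ) - (u - m) = v - u := by ring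
      rw [heq] at this
      refine this.trans ?_
      have : 0 ≤ M * (v - u) ^ α :=
        mul_nonneg hM.le (Real.rpow_nonneg (by linarith) _)
      linarith
    · push_neg at hcase
      have hEv1 : deriv γ (v - (m:ℝ) - 1) = deriv γ v := by
        have := hperD.sub_int_mul_eq (x := v) (m + 1)
        simpa [sub_sub] using this
      have hE01 : deriv γ 1 = deriv γ 0 := by simpa using hperD 0
      rw [← hEu, ← hEv1]
      have hsplit : deriv γ (v - (m:ℝ) - 1) - deriv γ (u - m)
          = (deriv γ (v - (m:ℝ) - 1) - deriv γ 0) + (deriv γ 1 - deriv γ (u - m)) := by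
        rw [hE01]; abel
      rw [hsplit]
      have h1 : ‖deriv γ (v - (m:ℝ) - 1) - deriv γ 0‖ ≤ M * (v - u) ^ α := by
        have hb : v - (m:ℝ) - 1 ≤ 1 := by linarith
        have := hHolder 0 (v - (m:ℝ) - 1) (by linarith) (by linarith) hb
        simp only [sub_zero] at this
        refine this.trans (mul_le_mul_of_nonneg_left ?_ hM.le)
        exact Real.rpow_le_rpow (by linarith) (by linarith) hα0
      have h2 : ‖deriv γ 1 - deriv γ (u - m)‖ ≤ M * (v - u) ^ α := by
        have := hHolder (u - m) 1 hfr0 (by linarith) le_rfl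
        refine this.trans (mul_le_mul_of_nonneg_left ?_ hM.le)
        exact Real.rpow_le_rpow (by linarith) (by linarith) hα0
      calc ‖_ + _‖ ≤ _ := norm_add_le _ _
        _ ≤ 2 * M * (v - u) ^ α := by linarith
  -- the key smallness estimate
  have hkey : ∀ s : ℝ, 0 ≤ s → s ≤ ε → 2 * M * s ^ α ≤ 1/8 := by
    intro s hs0 hsε
    have h1 : s ^ α ≤ ε ^ α := Real.rpow_le_rpow hs0 hsε hα0
    have h2 : ε ^ α ≤ ε ^ ((1:ℝ)/2) :=
      Real.rpow_le_rpow_of_exponent_ge hε0 hε1 hαhalf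
    have h3 : s ^ α ≤ t := le_trans h1 (le_trans h2 hεsqrt)
    have : 2 * M * s ^ α ≤ 2 * M * t := by
      have : 0 ≤ 2 * M := by linarith
      exact mul_le_mul_of_nonneg_left h3 this
    refine this.trans ?_
    rw [ht]
    rw [mul_inv_le_iff₀ (by positivity)]
    ring_nf
    linarith
  -- derivative of the mollification and closeness
  set k : ℝ → ℝ := fun y => ε⁻¹ * η (y / ε) with hkdef
  have hkc : Continuous k := k_cont hη
  have hks : HasCompactSupport k := k_supp hη hε0
  have hDclose : ∀ x : ℝ, deriv (mollify η ε γ) x = ∫ y : ℝ, k y • deriv γ (x - y) ∧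
      ‖(∫ y : ℝ, k y • deriv γ (x - y)) - deriv γ x‖ ≤ 1/8 := by
    intro x
    have hderiv := (mollify_hasDerivAt hη hε0 hW.contDiff harc x).deriv
    refine ⟨hderiv, ?_⟩
    have hA : Integrable (fun y => k y • deriv γ (x - y)) :=
      ((hkc.smul ((hW.contDiff.continuous_deriv le_rfl).comp
        (continuous_const.sub continuous_id))).integrable_of_hasCompactSupport hks.smul_right)
    have hB : Integrable (fun y => k y • deriv γ x) :=
      (k_integrable hη hε0).smul_const _
    have hrepr : (∫ y : ℝ, k y • deriv γ (x - y)) - deriv γ x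
        = ∫ y : ℝ, (k y • deriv γ (x - y) - k y • deriv γ x) := by
      rw [MeasureTheory.integral_sub hA hB, integral_smul_const,
        k_int_one hη hε0, one_smul]
    rw [hrepr]
    have hbd : ∀ y : ℝ, ‖k y • deriv γ (x - y) - k y • deriv γ x‖ ≤ ‖k y‖ * (1/8) := by
      intro y
      rw [← smul_sub, norm_smul]
      by_cases hy : |y| ≤ ε
      · refine mul_le_mul_of_nonneg_left ?_ (norm_nonneg _)
        rcases le_or_gt 0 y with h0 | h0
        · have := hP (x - y) x (by linarith) (by rw [abs_of_nonneg h0] at hy; linarith)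
          rw [show x - (x - y) = y by ring] at this
          rw [norm_sub_rev]
          refine this.trans ?_
          exact hkey y h0 (by rwa [abs_of_nonneg h0] at hy)
        · have := hP x (x - y) (by linarith) (by rw [abs_of_neg h0] at hy; linarith)
          rw [show x - y - x = -y by ring] at this
          refine this.trans ?_
          exact hkey (-y) (by linarith) (by rwa [abs_of_neg h0] at hy)
      · have hk0 : k y = 0 := by
          have : 1 ≤ |y / ε| := by
            rw [abs_div, abs_of_pos hε0, le_div_iff₀ hε0, one_mul]
            linarith [not_le.mp hy]
          simp [hkdef, hη.vanish _ this]
        simp [hk0]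
    have := MeasureTheory.norm_integral_le_of_norm_le
      ((k_integrable hη hε0).norm.mul_const (1/8))
      (Filter.Eventually.of_forall hbd)
    refine this.trans ?_
    have hknorm : (∫ y : ℝ, ‖k y‖ * (1/8)) = 1/8 := by
      have : ∀ y : ℝ, ‖k y‖ * (1/8) = (1/8) * k y := fun y => by
        rw [Real.norm_of_nonneg (k_nonneg hη hε0 y)]; ring
      simp only [this]
      rw [MeasureTheory.integral_const_mul, k_int_one hη hε0, mul_one]
    rw [hknorm]
  constructor
  · intro x
    obtain ⟨hd, hc⟩ := hDclose x
    rw [hd]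
    intro h0
    rw [h0] at hc
    have := harc x
    rw [zero_sub, norm_neg, this] at hc
    norm_num at hc
  · intro x
    obtain ⟨hd, hc⟩ := hDclose x
    rw [hd]
    set v : En n := ∫ y : ℝ, k y • deriv γ (x - y) with hv
    set u : En n := deriv γ x with hu
    have hun : ‖u‖ = 1 := harc x
    have hvn : (7:ℝ)/8 ≤ ‖v‖ := by
      have h1 : ‖u‖ - ‖v‖ ≤ ‖v - u‖ := by
        have := abs_norm_sub_norm_le u v
        rw [norm_sub_rev] at this
        calc ‖u‖ - ‖v‖ ≤ |‖u‖ - ‖v‖| := le_abs_self _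
          _ ≤ ‖v - u‖ := this
      rw [hun] at h1; linarith
    have hvne : ‖v‖ ≠ 0 := by intro h; rw [h] at hvn; norm_num at hvn
    have htri : ‖‖v‖⁻¹ • v - u‖ ≤ ‖‖v‖⁻¹ • v - v‖ + ‖v - u‖ := by
      calc ‖‖v‖⁻¹ • v - u‖ = ‖(‖v‖⁻¹ • v - v) + (v - u)‖ := by congr 1; abel
        _ ≤ _ := norm_add_le _ _
    have hfirst : ‖‖v‖⁻¹ • v - v‖ = |1 - ‖v‖| := by
      have h1 : ‖v‖⁻¹ • v - v = (‖v‖⁻¹ - 1) • v := by rw [sub_smul, one_smul]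
      rw [h1, norm_smul, Real.norm_eq_abs]
      have h2 : |‖v‖⁻¹ - 1| * ‖v‖ = |(‖v‖⁻¹ - 1) * ‖v‖| := by
        rw [abs_mul, abs_of_nonneg (norm_nonneg v)]
      rw [h2, sub_mul, inv_mul_cancel₀ hvne, one_mul]
    have hsecond : |1 - ‖v‖| ≤ 1/8 := by
      have := abs_norm_sub_norm_le u v
      rw [hun, norm_sub_rev] at this
      exact this.trans hc
    calc ‖‖v‖⁻¹ • v - u‖ ≤ ‖‖v‖⁻¹ • v - v‖ + ‖v - u‖ := htri
      _ ≤ 1/8 + 1/8 := by rw [hfirst]; exact add_le_add hsecond hc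
      _ ≤ 1/4 := by norm_num
end

section
/- Let p > 2 and M > 0, and let γ ∈ W^{2,p}(ℝ/ℤ, ℝⁿ) be a closed curve parametrised by arc-length with ‖γ'‖_{W^{1,p}} ≤ M. Then for ε = ε(p, M) > 0 as in the approximate tangent lemma, the unit tangent map τ = γ'_ε/|γ'_ε| : ℝ/ℤ → S^{n−1} of the mollified curve γ_ε is smooth and satisfies ‖τ'‖_{L^∞} ≤ C and ‖τ''‖_{L^∞} ≤ C for a constant C = C(p, M) > 0. -/
open MeasureTheory Real Filter Set
open scoped ENNReal

noncomputable section Aux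
open MeasureTheory Real Set
open scoped ENNReal

lemma core_holder {n : ℕ} {p M : ℝ} (hp : 2 < p) (hM : 0 < M) {γ γ₂ : ℝ → En n}
    (hγ : IsW2p p 1 γ γ₂) (harc : ArcLength γ) (hw : w1pNormD p 1 (deriv γ) γ₂ ≤ M)
    {a b : ℝ} (ha : 0 ≤ a) (hab : a ≤ b) (hb : b ≤ 1) :
    ‖deriv γ b - deriv γ a‖ ≤ M * (b - a) ^ (1 - 1/p) := by
  have hp1 : (1:ℝ) ≤ p := by linarith
  set q : ℝ≥0∞ := ENNReal.ofReal p with hqdef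
  have hq1 : (1:ℝ≥0∞) ≤ q := by
    rw [hqdef, ← ENNReal.ofReal_one]
    exact ENNReal.ofReal_le_ofReal hp1
  have hqt : q.toReal = p := ENNReal.toReal_ofReal (by linarith)
  have hq0 : q ≠ 0 := by
    intro h; rw [h] at hq1; simp at hq1
  have hqtop : q ≠ ⊤ := ENNReal.ofReal_ne_top
  haveI : IsFiniteMeasure (volume.restrict (Set.Ioc (0:ℝ) 1)) := by
    constructor
    rw [Measure.restrict_apply_univ, Real.volume_Ioc]
    exact ENNReal.ofReal_lt_top
  have hint : IntegrableOn γ₂ (Set.Ioc (0:ℝ) 1) volume := hγ.memLp.integrable hq1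
  have hsub : Set.Ioc a b ⊆ Set.Ioc (0:ℝ) 1 := Set.Ioc_subset_Ioc ha hb
  -- FTC difference
  have hib : IntervalIntegrable γ₂ volume 0 b :=
    (intervalIntegrable_iff_integrableOn_Ioc_of_le (le_trans ha hab)).2
      (hint.mono_set (Set.Ioc_subset_Ioc le_rfl hb))
  have hia : IntervalIntegrable γ₂ volume 0 a :=
    (intervalIntegrable_iff_integrableOn_Ioc_of_le ha).2
      (hint.mono_set (Set.Ioc_subset_Ioc le_rfl (le_trans hab hb)))
  have hdiff : deriv γ b - deriv γ a = ∫ y in a..b, γ₂ y := by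
    rw [hγ.ftc b, hγ.ftc a]
    rw [add_sub_add_left_eq_sub]
    exact intervalIntegral.integral_interval_sub_left hib hia
  rw [hdiff]
  set ν := volume.restrict (Set.Ioc a b) with hνdef
  have h1 : ‖∫ y in a..b, γ₂ y‖ ≤ ∫ y in a..b, ‖γ₂ y‖ :=
    intervalIntegral.norm_integral_le_integral_norm hab
  have h2 : (∫ y in a..b, ‖γ₂ y‖) = ∫ y, ‖γ₂ y‖ ∂ν := by
    rw [intervalIntegral.integral_of_le hab]
  have hmeasab : AEStronglyMeasurable γ₂ ν := (hint.mono_set hsub).1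
  have h3 : (∫ y, ‖γ₂ y‖ ∂ν) = (eLpNorm γ₂ 1 ν).toReal := by
    rw [integral_norm_eq_lintegral_enorm hmeasab, eLpNorm_one_eq_lintegral_enorm]
  -- L^p bound for γ₂ over (0,1]
  have hMn : eLpNorm γ₂ q (volume.restrict (Set.Ioc (0:ℝ) 1)) ≤ ENNReal.ofReal M := by
    rw [hγ.memLp.eLpNorm_eq_integral_rpow_norm hq0 hqtop]
    apply ENNReal.ofReal_le_ofReal
    have hintp : Integrable (fun x => ‖γ₂ x‖ ^ p) (volume.restrict (Set.Ioc (0:ℝ) 1)) := by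
      have := hγ.memLp.integrable_norm_rpow hq0 hqtop
      rwa [hqt] at this
    have hfun : (fun x => ‖deriv γ x‖ ^ p + ‖γ₂ x‖ ^ p) = fun x => 1 + ‖γ₂ x‖ ^ p := by
      funext x; rw [harc x, Real.one_rpow]
    have hintsum : Integrable (fun x => ‖deriv γ x‖ ^ p + ‖γ₂ x‖ ^ p)
        (volume.restrict (Set.Ioc (0:ℝ) 1)) := by
      rw [hfun]; exact (integrable_const 1).add hintp
    have hmono : (∫ x, ‖γ₂ x‖ ^ p ∂(volume.restrict (Set.Ioc (0:ℝ) 1)))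
        ≤ ∫ x, (‖deriv γ x‖ ^ p + ‖γ₂ x‖ ^ p) ∂(volume.restrict (Set.Ioc (0:ℝ) 1)) := by
      apply integral_mono hintp hintsum
      intro x
      exact le_add_of_nonneg_left (Real.rpow_nonneg (norm_nonneg _) p)
    have hle : (∫ x, ‖γ₂ x‖ ^ p ∂(volume.restrict (Set.Ioc (0:ℝ) 1))) ^ p⁻¹
        ≤ (∫ x, (‖deriv γ x‖ ^ p + ‖γ₂ x‖ ^ p) ∂(volume.restrict (Set.Ioc (0:ℝ) 1))) ^ p⁻¹ := by
      apply Real.rpow_le_rpow (integral_nonneg (fun x => Real.rpow_nonneg (norm_nonneg _) p))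
        hmono (by positivity)
    rw [hqt]
    refine le_trans hle ?_
    have : (∫ x, (‖deriv γ x‖ ^ p + ‖γ₂ x‖ ^ p) ∂(volume.restrict (Set.Ioc (0:ℝ) 1)))
        = ∫ x in (0:ℝ)..1, (‖deriv γ x‖ ^ p + ‖γ₂ x‖ ^ p) := by
      rw [intervalIntegral.integral_of_le (zero_le_one)]
    rw [this]
    have := hw
    rw [w1pNormD] at this
    rwa [one_div] at this
  have hmono' : eLpNorm γ₂ q ν ≤ eLpNorm γ₂ q (volume.restrict (Set.Ioc (0:ℝ) 1)) :=
    eLpNorm_mono_measure γ₂ (Measure.restrict_mono hsub le_rfl)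
  have hkey : eLpNorm γ₂ 1 ν ≤ ENNReal.ofReal M * ENNReal.ofReal (b - a) ^ (1 - 1/p) := by
    have h4 := eLpNorm_le_eLpNorm_mul_rpow_measure_univ hq1 hmeasab
    have h5 : ν Set.univ = ENNReal.ofReal (b - a) := by
      rw [hνdef, Measure.restrict_apply_univ, Real.volume_Ioc]
    have h6 : 1 / (1:ℝ≥0∞).toReal - 1 / q.toReal = 1 - 1/p := by
      rw [hqt]; norm_num
    rw [h5, h6] at h4
    exact le_trans h4 (mul_le_mul_left (le_trans hmono' hMn) _)
  have hαnn : (0:ℝ) ≤ 1 - 1/p := by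
    have : 1/p ≤ 1/2 := by
      rw [div_le_div_iff₀ (by linarith) (by norm_num)]; linarith
    linarith
  have hfin : ENNReal.ofReal M * ENNReal.ofReal (b - a) ^ (1 - 1/p) ≠ ⊤ := by
    apply ENNReal.mul_ne_top ENNReal.ofReal_ne_top
    exact ENNReal.rpow_ne_top_of_nonneg hαnn ENNReal.ofReal_ne_top
  have h7 : (eLpNorm γ₂ 1 ν).toReal ≤ M * (b - a) ^ (1 - 1/p) := by
    have := ENNReal.toReal_mono hfin hkey
    rwa [ENNReal.toReal_mul, ENNReal.toReal_ofReal hM.le, ← ENNReal.toReal_rpow,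
      ENNReal.toReal_ofReal (sub_nonneg.2 hab)] at this
  calc ‖∫ y in a..b, γ₂ y‖ ≤ ∫ y in a..b, ‖γ₂ y‖ := h1
    _ = (eLpNorm γ₂ 1 ν).toReal := by rw [h2, h3]
    _ ≤ M * (b - a) ^ (1 - 1/p) := h7

end Aux

lemma holder_global {n : ℕ} {p M : ℝ} (hp : 2 < p) (hM : 0 < M) {γ γ₂ : ℝ → En n}
    (hγ : IsW2p p 1 γ γ₂) (harc : ArcLength γ) (hw : w1pNormD p 1 (deriv γ) γ₂ ≤ M)
    {u x : ℝ} (hux : u ≤ x) (hd : x - u ≤ 1/2) :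
    ‖deriv γ x - deriv γ u‖ ≤ 2 * M * (x - u) ^ (1 - 1/p) := by
  set g := deriv γ with hg
  have gper : Function.Periodic g 1 := by
    intro t
    have hfun : γ = fun s => γ (s + 1) := funext fun s => (hγ.periodic s).symm
    calc g (t + 1) = deriv (fun s => γ (s + 1)) t := (deriv_comp_add_const γ 1 t).symm
      _ = g t := by rw [← hfun]
  have gshiftZ : ∀ (t : ℝ) (k : ℤ), g (t - k) = g t := by
    intro t k
    have := gper.sub_int_mul_eq (x := t) (n := k)
    simpa using this
  have hux' : (0:ℝ) ≤ x - u := by linarith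
  have hαnn : (0:ℝ) ≤ 1 - 1/p := by
    have : 1/p ≤ 1/2 := by
      rw [div_le_div_iff₀ (by linarith) (by norm_num)]; linarith
    linarith
  set m : ℤ := ⌊u⌋ with hm
  set a : ℝ := u - m with hadef
  set b : ℝ := x - m with hbdef
  have ha0 : 0 ≤ a := sub_nonneg.2 (Int.floor_le u)
  have ha1 : a < 1 := by
    have := Int.lt_floor_add_one u
    rw [hadef]; linarith
  have hab : a ≤ b := by rw [hadef, hbdef]; linarith
  have hba : b - a = x - u := by rw [hadef, hbdef]; ring
  have ega : g a = g u := gshiftZ u m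
  have egb : g b = g x := gshiftZ x m
  by_cases hble : b ≤ 1
  · have := core_holder hp hM hγ harc hw ha0 hab hble
    rw [← hg, ega, egb, hba] at this
    have hnn : 0 ≤ M * (x - u) ^ (1 - 1/p) :=
      mul_nonneg hM.le (Real.rpow_nonneg hux' _)
    linarith
  · push_neg at hble
    have hb32 : b ≤ 3/2 := by rw [hbdef]; rw [hadef] at ha1; linarith
    have hcast : ((m + 1 : ℤ) : ℝ) = (m : ℝ) + 1 := by push_cast; ring
    have egb1 : g (b - 1) = g x := by
      have : b - 1 = x - ((m + 1 : ℤ) : ℝ) := by rw [hbdef, hcast]; ring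
      rw [this]; exact gshiftZ x (m + 1)
    have eg0 : g 0 = g ((m : ℝ) + 1) := by
      have h := gshiftZ ((m:ℝ)+1) (m+1)
      rw [hcast] at h; simpa using h
    have eg1 : g 1 = g ((m : ℝ) + 1) := by
      have h := gshiftZ ((m:ℝ)+1) m
      simpa using h
    have c1 := core_holder hp hM hγ harc hw (le_refl (0:ℝ)) (by linarith : (0:ℝ) ≤ b - 1)
      (by linarith : b - 1 ≤ 1)
    have c2 := core_holder hp hM hγ harc hw ha0 ha1.le (le_refl (1:ℝ))
    rw [← hg] at c1 c2
    rw [egb1, eg0] at c1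
    rw [eg1, ega] at c2
    have r1 : M * (b - 1 - 0) ^ (1 - 1/p) ≤ M * (x - u) ^ (1 - 1/p) := by
      apply mul_le_mul_of_nonneg_left _ hM.le
      apply Real.rpow_le_rpow (by linarith) (by linarith) hαnn
    have r2 : M * (1 - a) ^ (1 - 1/p) ≤ M * (x - u) ^ (1 - 1/p) := by
      apply mul_le_mul_of_nonneg_left _ hM.le
      apply Real.rpow_le_rpow (by linarith) (by linarith) hαnn
    have tri : ‖g x - g u‖ ≤ ‖g x - g ((m:ℝ)+1)‖ + ‖g ((m:ℝ)+1) - g u‖ :=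
      norm_sub_le_norm_sub_add_norm_sub _ _ _
    calc ‖g x - g u‖ ≤ ‖g x - g ((m:ℝ)+1)‖ + ‖g ((m:ℝ)+1) - g u‖ := tri
      _ ≤ M * (b - 1 - 0) ^ (1 - 1/p) + M * (1 - a) ^ (1 - 1/p) := add_le_add c1 c2
      _ ≤ M * (x - u) ^ (1 - 1/p) + M * (x - u) ^ (1 - 1/p) := add_le_add r1 r2
      _ = 2 * M * (x - u) ^ (1 - 1/p) := by ring

section Main
open MeasureTheory Real Set
open scoped ENNReal

lemma conv_eq {n : ℕ} (u : ℝ → En n) (ψ : ℝ → ℝ) (x : ℝ) :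
    convolution u ψ ((ContinuousLinearMap.lsmul ℝ ℝ).flip) volume x
      = ∫ y, ψ y • u (x - y) := by
  rw [convolution]
  rw [← integral_sub_left_eq_self (fun y => ψ y • u (x - y)) volume x]
  congr 1; funext t
  simp [sub_sub_cancel]

lemma rpow_aux {u : ℝ} (hu : (49/64:ℝ) ≤ u) {e : ℝ} (he1 : -(5/2) ≤ e) (he2 : e ≤ 0) :
    u ^ e ≤ 2 := by
  have h1 : u ^ e ≤ (49/64 : ℝ) ^ e :=
    Real.rpow_le_rpow_of_nonpos (by norm_num) hu he2
  have h2 : (49/64 : ℝ) ^ e ≤ (49/64 : ℝ) ^ (-(5/2) : ℝ) :=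
    Real.rpow_le_rpow_of_exponent_ge (by norm_num) (by norm_num) he1
  have h3 : (49/64 : ℝ) ^ (-(5/2) : ℝ) ≤ 2 := by
    have e1 : (49/64 : ℝ) = (7/8 : ℝ) ^ ((2:ℕ):ℝ) := by
      rw [Real.rpow_natCast]; norm_num
    rw [e1, ← Real.rpow_mul (by norm_num)]
    rw [show (((2:ℕ):ℝ) * -(5/2)) = -((5:ℕ):ℝ) by norm_num]
    rw [Real.rpow_neg (by norm_num), Real.rpow_natCast]
    rw [show ((7:ℝ)/8)^(5:ℕ) = 16807/32768 by norm_num]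
    norm_num
  linarith

set_option maxHeartbeats 2000000 in
theorem stmt_5' {n : ℕ} (p M : ℝ) (hp : 2 < p) (hM : 0 < M)
    (η : ℝ → ℝ) (hη : IsMollifier η) :
    ∃ ε > (0:ℝ), ∃ C > (0:ℝ), ∀ (γ γ₂ : ℝ → En n), IsW2p p 1 γ γ₂ → ArcLength γ →
      w1pNormD p 1 (deriv γ) γ₂ ≤ M →
      (∀ x, deriv (mollify η ε γ) x ≠ 0) ∧
      (∀ x, ‖‖deriv (mollify η ε γ) x‖⁻¹ • deriv (mollify η ε γ) x - deriv γ x‖ ≤ 1 / 4) ∧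
      ContDiff ℝ (⊤ : ℕ∞)
        (fun y => ‖deriv (mollify η ε γ) y‖⁻¹ • deriv (mollify η ε γ) y) ∧
      (∀ x, ‖‖deriv (mollify η ε γ) x‖⁻¹ • deriv (mollify η ε γ) x‖ = 1) ∧
      (∀ x, ‖deriv (fun y => ‖deriv (mollify η ε γ) y‖⁻¹ • deriv (mollify η ε γ) y) x‖
        ≤ C) ∧
      (∀ x, ‖deriv (deriv
          (fun y => ‖deriv (mollify η ε γ) y‖⁻¹ • deriv (mollify η ε γ) y)) x‖ ≤ C) := by
  have hp1 : (1:ℝ) < p := by linarith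
  set α : ℝ := 1 - 1/p with hαdef
  have hα2 : (1/2:ℝ) ≤ α := by
    have : 1/p ≤ 1/2 := by
      rw [div_le_div_iff₀ (by linarith) (by norm_num)]; linarith
    rw [hαdef]; linarith
  have hα0 : (0:ℝ) < α := lt_of_lt_of_le (by norm_num) hα2
  set ε : ℝ := min (1/2) ((1/(16*M)) ^ α⁻¹) with hεdef
  have hεpos : 0 < ε := lt_min (by norm_num) (Real.rpow_pos_of_pos (by positivity) _)
  have hεhalf : ε ≤ 1/2 := min_le_left _ _
  have hεsmall : 2 * M * ε ^ α ≤ 1/8 := by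
    have h1 : ε ^ α ≤ ((1/(16*M)) ^ α⁻¹) ^ α :=
      Real.rpow_le_rpow hεpos.le (min_le_right _ _) hα0.le
    have h2 : ((1/(16*M)) ^ α⁻¹ : ℝ) ^ α = 1/(16*M) := by
      rw [← Real.rpow_mul (by positivity), inv_mul_cancel₀ hα0.ne', Real.rpow_one]
    rw [h2] at h1
    have : 2 * M * ε ^ α ≤ 2 * M * (1/(16*M)) :=
      mul_le_mul_of_nonneg_left h1 (by positivity)
    have e : 2 * M * (1/(16*M)) = 1/8 := by field_simp; ring
    linarith [e ▸ this]
  -- the rescaled mollifier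
  set φ : ℝ → ℝ := fun y => ε⁻¹ * η (y / ε) with hφdef
  have φsm : ContDiff ℝ (⊤:ℕ∞) φ := by
    have : ContDiff ℝ (⊤:ℕ∞) fun y : ℝ => η (y / ε) :=
      hη.smooth.comp (contDiff_id.div_const ε)
    exact this.const_smul (ε⁻¹ : ℝ)
  have φsupp : ∀ y, ε ≤ |y| → φ y = 0 := by
    intro y hy
    have : (1:ℝ) ≤ |y / ε| := by
      rw [abs_div, abs_of_pos hεpos, le_div_iff₀ hεpos]
      linarith
    rw [hφdef]; simp [hη.vanish _ this]
  have φcs : HasCompactSupport φ := by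
    apply HasCompactSupport.intro (isCompact_Icc (a := -ε) (b := ε))
    intro y hy
    apply φsupp
    simp only [Set.mem_Icc, not_and_or, not_le] at hy
    rcases hy with h | h
    · rw [abs_of_neg (by linarith)]; linarith
    · rw [abs_of_pos (by linarith)]; linarith
  have φnn : ∀ y, 0 ≤ φ y := fun y =>
    mul_nonneg (inv_nonneg.2 hεpos.le) (hη.nonneg _)
  have φone : (∫ y, φ y) = 1 := by
    rw [hφdef]
    simp only
    rw [MeasureTheory.integral_const_mul]
    rw [MeasureTheory.Measure.integral_comp_div η ε]
    rw [abs_of_pos hεpos, smul_eq_mul, hη.integral_one]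
    field_simp
  have φcont : Continuous φ := φsm.continuous
  have φint : Integrable φ := φcont.integrable_of_hasCompactSupport φcs
  have φ'sm : ContDiff ℝ (⊤:ℕ∞) (deriv φ) := (contDiff_infty_iff_deriv.mp φsm).2
  have φ''sm : ContDiff ℝ (⊤:ℕ∞) (deriv (deriv φ)) := (contDiff_infty_iff_deriv.mp φ'sm).2
  have φ'cs : HasCompactSupport (deriv φ) := φcs.deriv
  have φ''cs : HasCompactSupport (deriv (deriv φ)) := φ'cs.deriv
  set A : ℝ := ∫ y, |deriv φ y| with hAdef
  set B : ℝ := ∫ y, |deriv (deriv φ) y| with hBdef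
  have hA0 : 0 ≤ A := integral_nonneg fun y => abs_nonneg _
  have hB0 : 0 ≤ B := integral_nonneg fun y => abs_nonneg _
  set C : ℝ := 100 * (1 + A + B)^2 + 1 with hCdef
  have hC : 0 < C := by positivity
  refine ⟨ε, hεpos, C, hC, ?_⟩
  intro γ γ₂ hγ harc hw
  -- basic facts about the tangent g
  set g : ℝ → En n := deriv γ with hgdef
  have gcont : Continuous g := hγ.contDiff.continuous_deriv le_rfl
  have gnorm : ∀ t, ‖g t‖ = 1 := harc
  have gli : MeasureTheory.LocallyIntegrable g volume := gcont.locallyIntegrable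
  have γcont : Continuous γ := hγ.contDiff.continuous
  -- Hölder continuity of g
  have holder : ∀ x y : ℝ, |y| ≤ 1/2 → ‖g (x - y) - g x‖ ≤ 2*M*|y| ^ α := by
    intro x y hy
    rcases le_or_gt 0 y with h0 | h0
    · have := holder_global hp hM hγ harc hw (u := x - y) (x := x)
        (by linarith) (by rw [abs_of_nonneg h0] at hy; linarith)
      rw [← hgdef] at this
      rw [norm_sub_rev]
      have e : x - (x - y) = y := by ring
      rw [e] at this
      rwa [abs_of_nonneg h0]
    · have := holder_global hp hM hγ harc hw (u := x) (x := x - y)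
        (by linarith) (by rw [abs_of_neg h0] at hy; linarith)
      rw [← hgdef] at this
      have e : x - y - x = -y := by ring
      rw [e] at this
      rwa [abs_of_neg h0]
  have hclose : ∀ x y : ℝ, φ y ≠ 0 → ‖g (x - y) - g x‖ ≤ 1/8 := by
    intro x y hne
    have hyε : |y| ≤ ε := by
      by_contra hcon
      push_neg at hcon
      exact hne (φsupp y hcon.le)
    have h1 := holder x y (le_trans hyε hεhalf)
    have h2 : (|y|:ℝ) ^ α ≤ ε ^ α := Real.rpow_le_rpow (abs_nonneg _) hyε hα0.le
    have h3 : 2*M*|y| ^ α ≤ 2*M*ε ^ α := by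
      apply mul_le_mul_of_nonneg_left h2 (by positivity)
    linarith
  -- integrability of mollification integrands
  have Fint : ∀ (x : ℝ) (u : ℝ → En n), Continuous u →
      MeasureTheory.Integrable (fun y => φ y • u (x - y)) := by
    intro x u hu
    apply Continuous.integrable_of_hasCompactSupport
    · exact φcont.smul (hu.comp (continuous_const.sub continuous_id))
    · exact φcs.smul_right
  -- derivative of the mollification
  set v : ℝ → En n := fun x => ∫ y, φ y • g (x - y) with hvdef
  have hmder : ∀ x, HasDerivAt (mollify η ε γ) (v x) x := by
    intro x
    have key := hasDerivAt_integral_of_dominated_loc_of_deriv_le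
      (F := fun x' y => φ y • γ (x' - y)) (F' := fun x' y => φ y • g (x' - y))
      (x₀ := x) (bound := fun y => |φ y|) (s := Metric.ball x 1) (Metric.ball_mem_nhds x one_pos)
      (Filter.Eventually.of_forall fun x' =>
        (φcont.smul (γcont.comp (continuous_const.sub continuous_id))).aestronglyMeasurable)
      (Fint x γ γcont)
      ((φcont.smul (gcont.comp (continuous_const.sub continuous_id))).aestronglyMeasurable)
      (Filter.Eventually.of_forall ?_) (φint.abs) (Filter.Eventually.of_forall ?_)
    · exact key.2
    · intro y x' _
      rw [norm_smul, gnorm, Real.norm_eq_abs, mul_one]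
    · intro y x' _
      have hd1 : HasDerivAt γ (g (x' - y)) (x' - y) := by
        have := (hγ.contDiff.differentiable one_ne_zero (x' - y)).hasDerivAt
        rwa [← hgdef] at this
      have hd2 : HasDerivAt (fun t : ℝ => t - y) 1 x' := (hasDerivAt_id x').sub_const y
      have hd3 : HasDerivAt (fun t : ℝ => γ (t - y)) (g (x' - y)) x' := by
        have := HasDerivAt.scomp x' hd1 hd2
        simpa [Function.comp_def] using this
      exact hd3.const_smul (φ y)
  have hderiv : deriv (mollify η ε γ) = v := funext fun x => (hmder x).deriv
  -- identification with convolution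
  have hveq : v = convolution g φ ((ContinuousLinearMap.lsmul ℝ ℝ).flip) volume :=
    funext fun x => (conv_eq g φ x).symm
  have hvsm : ContDiff ℝ (⊤:ℕ∞) v := by
    rw [hveq]
    exact φcs.contDiff_convolution_right _ gli φsm
  set v1 : ℝ → En n := convolution g (deriv φ) ((ContinuousLinearMap.lsmul ℝ ℝ).flip) volume
    with hv1def
  set v2 : ℝ → En n := convolution g (deriv (deriv φ)) ((ContinuousLinearMap.lsmul ℝ ℝ).flip)
    volume with hv2def
  have hvd : ∀ x, HasDerivAt v (v1 x) x := by
    intro x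
    rw [hveq]
    exact φcs.hasDerivAt_convolution_right _ gli (φsm.of_le (by exact_mod_cast le_top)) x
  have hv1d : ∀ x, HasDerivAt v1 (v2 x) x := by
    intro x
    exact φ'cs.hasDerivAt_convolution_right _ gli (φ'sm.of_le (by exact_mod_cast le_top)) x
  -- norm bounds for convolutions with g
  have normconv : ∀ (ψ : ℝ → ℝ) (x : ℝ),
      ‖convolution g ψ ((ContinuousLinearMap.lsmul ℝ ℝ).flip) volume x‖ ≤ ∫ y, |ψ y| := by
    intro ψ x
    rw [conv_eq]
    calc ‖∫ y, ψ y • g (x - y)‖ ≤ ∫ y, ‖ψ y • g (x - y)‖ :=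
          MeasureTheory.norm_integral_le_integral_norm _
      _ = ∫ y, |ψ y| := by
          congr 1; funext y
          rw [norm_smul, gnorm, Real.norm_eq_abs, mul_one]
  have hv1b : ∀ x, ‖v1 x‖ ≤ A := fun x => normconv (deriv φ) x
  have hv2b : ∀ x, ‖v2 x‖ ≤ B := fun x => normconv (deriv (deriv φ)) x
  -- approximation property
  have happ : ∀ x, ‖v x - g x‖ ≤ 1/8 := by
    intro x
    have hgx : g x = ∫ y, φ y • g x := by
      rw [integral_smul_const, φone, one_smul]
    have hsub : v x - g x = ∫ y, (φ y • g (x - y) - φ y • g x) := by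
      conv_lhs => rw [hgx]
      exact (MeasureTheory.integral_sub (Fint x g gcont) (φint.smul_const (g x))).symm
    rw [hsub]
    have hb : ∀ y, ‖φ y • g (x - y) - φ y • g x‖ ≤ φ y * (1/8) := by
      intro y
      by_cases hy : φ y = 0
      · simp [hy]
      · rw [← smul_sub, norm_smul, Real.norm_eq_abs, abs_of_nonneg (φnn y)]
        exact mul_le_mul_of_nonneg_left (hclose x y hy) (φnn y)
    calc ‖∫ y, (φ y • g (x - y) - φ y • g x)‖ ≤ ∫ y, φ y * (1/8) :=
          MeasureTheory.norm_integral_le_of_norm_le (φint.mul_const _)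
            (Filter.Eventually.of_forall hb)
      _ = 1/8 := by rw [MeasureTheory.integral_mul_const, φone, one_mul]
  have hvlo : ∀ x, 7/8 ≤ ‖v x‖ := by
    intro x
    have h1 := abs_norm_sub_norm_le (v x) (g x)
    have h2 := happ x
    have h3 := gnorm x
    have := abs_le.1 h1
    linarith [this.1]
  have hvhi : ∀ x, ‖v x‖ ≤ 9/8 := by
    intro x
    have h1 := abs_norm_sub_norm_le (v x) (g x)
    have h2 := happ x
    have h3 := gnorm x
    have := abs_le.1 h1
    linarith [this.2]
  have hvne : ∀ x, v x ≠ 0 := by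
    intro x hcon
    have := hvlo x
    rw [hcon, norm_zero] at this
    linarith
  rw [hderiv]
  -- goal 2 helper: quasi-tangent estimate
  have hquasi : ∀ x, ‖‖v x‖⁻¹ • v x - g x‖ ≤ 1/4 := by
    intro x
    have hr0 : (0:ℝ) < ‖v x‖ := lt_of_lt_of_le (by norm_num) (hvlo x)
    have h1 : ‖v x‖⁻¹ • v x - v x = (‖v x‖⁻¹ - 1) • v x := by
      rw [sub_smul, one_smul]
    have h2 : ‖‖v x‖⁻¹ • v x - v x‖ = |1 - ‖v x‖| := by
      rw [h1, norm_smul, Real.norm_eq_abs, ← abs_of_pos hr0, ← abs_mul]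
      congr 1
      rw [abs_of_pos hr0]
      field_simp
    have h3 : |1 - ‖v x‖| ≤ 1/8 := by
      rw [abs_le]
      constructor <;> [linarith [hvhi x]; linarith [hvlo x]]
    calc ‖‖v x‖⁻¹ • v x - g x‖
        ≤ ‖‖v x‖⁻¹ • v x - v x‖ + ‖v x - g x‖ := norm_sub_le_norm_sub_add_norm_sub _ _ _
      _ ≤ 1/8 + 1/8 := by rw [h2]; exact add_le_add h3 (happ x)
      _ ≤ 1/4 := by norm_num
  -- smoothness of τ
  have hτsm : ContDiff ℝ (⊤:ℕ∞) (fun y => ‖v y‖⁻¹ • v y) := by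
    rw [contDiff_iff_contDiffAt]
    intro x
    exact ((ContDiffAt.norm ℝ hvsm.contDiffAt (hvne x)).inv
      (norm_ne_zero_iff.2 (hvne x))).smul hvsm.contDiffAt
  -- scalar auxiliary functions
  set τ : ℝ → En n := fun t => ‖v t‖⁻¹ • v t with hτdef
  set Q : ℝ → ℝ := fun t => (inner ℝ (v t) (v t) : ℝ) with hQdef
  have hqv : ∀ t, Q t = ‖v t‖^2 := fun t => real_inner_self_eq_norm_sq (v t)
  have hqlo : ∀ t, (49/64:ℝ) ≤ Q t := by
    intro t
    rw [hqv]
    have := hvlo t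
    nlinarith
  have hqne : ∀ t, Q t ≠ 0 := fun t =>
    ne_of_gt (lt_of_lt_of_le (by norm_num) (hqlo t))
  set c : ℝ := -(1/2) with hcdef
  have hny : ∀ t, Q t ^ c = ‖v t‖⁻¹ := by
    intro t
    rw [hqv, show (‖v t‖^2) = ‖v t‖ ^ ((2:ℕ):ℝ) from by rw [Real.rpow_natCast],
      ← Real.rpow_mul (norm_nonneg _),
      show (((2:ℕ):ℝ) * c) = -1 from by rw [hcdef]; norm_num, Real.rpow_neg_one]
  have hτh : τ = fun t => (Q t ^ c) • v t := funext fun t => by rw [hny t]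
  set s : ℝ → ℝ := fun t => (inner ℝ (v t) (v1 t) : ℝ) + (inner ℝ (v1 t) (v t) : ℝ) with hsdef
  have hqd : ∀ t, HasDerivAt Q (s t) t := fun t => HasDerivAt.inner ℝ (hvd t) (hvd t)
  have hhd : ∀ t, HasDerivAt (fun u => Q u ^ c) (c * Q t ^ (c-1) * s t) t := by
    intro t
    have h1 : HasDerivAt (fun y : ℝ => y ^ c) (c * Q t ^ (c-1)) (Q t) :=
      Real.hasDerivAt_rpow_const (Or.inl (hqne t))
    exact HasDerivAt.comp t h1 (hqd t)
  have hτd : ∀ t, HasDerivAt τ ((Q t ^ c) • v1 t + (c * Q t ^ (c-1) * s t) • v t) t := by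
    intro t
    rw [hτh]
    exact (hhd t).smul (hvd t)
  have hderivτ : deriv τ = fun t => (Q t ^ c) • v1 t + (c * Q t ^ (c-1) * s t) • v t :=
    funext fun t => (hτd t).deriv
  set s2 : ℝ → ℝ := fun t => ((inner ℝ (v t) (v2 t) : ℝ) + (inner ℝ (v1 t) (v1 t) : ℝ))
    + ((inner ℝ (v1 t) (v1 t) : ℝ) + (inner ℝ (v2 t) (v t) : ℝ)) with hs2def
  have hsd : ∀ t, HasDerivAt s (s2 t) t := fun t =>
    (HasDerivAt.inner ℝ (hvd t) (hv1d t)).add (HasDerivAt.inner ℝ (hv1d t) (hvd t))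
  have hq1d : ∀ t, HasDerivAt (fun u => Q u ^ (c-1)) ((c-1) * Q t ^ (c-1-1) * s t) t := by
    intro t
    have h1 : HasDerivAt (fun y : ℝ => y ^ (c-1)) ((c-1) * Q t ^ (c-1-1)) (Q t) :=
      Real.hasDerivAt_rpow_const (Or.inl (hqne t))
    exact HasDerivAt.comp t h1 (hqd t)
  have hcoefd : ∀ t, HasDerivAt (fun u => c * Q u ^ (c-1) * s u)
      (c * (Q t ^ (c-1) * s2 t + ((c-1) * Q t ^ (c-1-1) * s t) * s t)) t := by
    intro t
    have hmul : HasDerivAt (fun u => Q u ^ (c-1) * s u)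
        (((c-1) * Q t ^ (c-1-1) * s t) * s t + Q t ^ (c-1) * s2 t) t :=
      (hq1d t).mul (hsd t)
    have h2 := hmul.const_mul c
    have hfe : (fun u => c * (Q u ^ (c-1) * s u)) = fun u => c * Q u ^ (c-1) * s u := by
      funext u; ring
    have hval : c * (((c-1) * Q t ^ (c-1-1) * s t) * s t + Q t ^ (c-1) * s2 t)
        = c * (Q t ^ (c-1) * s2 t + ((c-1) * Q t ^ (c-1-1) * s t) * s t) := by ring
    rw [hfe, hval] at h2
    exact h2
  have hτdd : ∀ t, HasDerivAt (deriv τ)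
      (((Q t ^ c) • v2 t + (c * Q t ^ (c-1) * s t) • v1 t)
        + ((c * Q t ^ (c-1) * s t) • v1 t
          + (c * (Q t ^ (c-1) * s2 t + ((c-1) * Q t ^ (c-1-1) * s t) * s t)) • v t)) t := by
    intro t
    rw [hderivτ]
    exact ((hhd t).smul (hv1d t)).add ((hcoefd t).smul (hvd t))
  -- numeric bounds
  have hqnn : ∀ t, (0:ℝ) ≤ Q t := fun t => le_trans (by norm_num) (hqlo t)
  have E1 : ∀ t, Q t ^ c ≤ 2 := fun t =>
    rpow_aux (hqlo t) (by rw [hcdef]; norm_num) (by rw [hcdef]; norm_num)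
  have E2 : ∀ t, Q t ^ (c-1) ≤ 2 := fun t =>
    rpow_aux (hqlo t) (by rw [hcdef]; norm_num) (by rw [hcdef]; norm_num)
  have E3 : ∀ t, Q t ^ (c-1-1) ≤ 2 := fun t =>
    rpow_aux (hqlo t) (by rw [hcdef]; norm_num) (by rw [hcdef]; norm_num)
  have Enn : ∀ (e : ℝ) t, (0:ℝ) ≤ Q t ^ e := fun e t => Real.rpow_nonneg (hqnn t) e
  have hip : ∀ (a b : En n) (Ka Kb : ℝ), ‖a‖ ≤ Ka → ‖b‖ ≤ Kb →
      |(inner ℝ a b : ℝ)| ≤ Ka * Kb := by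
    intro a b Ka Kb ha hb
    calc |(inner ℝ a b : ℝ)| ≤ ‖a‖ * ‖b‖ := abs_real_inner_le_norm a b
      _ ≤ Ka * Kb := mul_le_mul ha hb (norm_nonneg _) (le_trans (norm_nonneg _) ha)
  have S : ∀ t, |s t| ≤ 2 * ((9/8) * A) := by
    intro t
    rw [hsdef]
    calc |(inner ℝ (v t) (v1 t) : ℝ) + (inner ℝ (v1 t) (v t) : ℝ)|
        ≤ |(inner ℝ (v t) (v1 t) : ℝ)| + |(inner ℝ (v1 t) (v t) : ℝ)| := abs_add_le _ _
      _ ≤ (9/8) * A + A * (9/8) := add_le_add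
          (hip _ _ _ _ (hvhi t) (hv1b t)) (hip _ _ _ _ (hv1b t) (hvhi t))
      _ = 2 * ((9/8) * A) := by ring
  have S2 : ∀ t, |s2 t| ≤ 2 * ((9/8) * B) + 2 * (A * A) := by
    intro t
    rw [hs2def]
    have i1 : |(inner ℝ (v t) (v2 t) : ℝ)| ≤ (9/8) * B := hip _ _ _ _ (hvhi t) (hv2b t)
    have i2 : |(inner ℝ (v1 t) (v1 t) : ℝ)| ≤ A * A := hip _ _ _ _ (hv1b t) (hv1b t)
    have i3 : |(inner ℝ (v2 t) (v t) : ℝ)| ≤ B * (9/8) := hip _ _ _ _ (hv2b t) (hvhi t)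
    calc |((inner ℝ (v t) (v2 t) : ℝ) + (inner ℝ (v1 t) (v1 t) : ℝ))
        + ((inner ℝ (v1 t) (v1 t) : ℝ) + (inner ℝ (v2 t) (v t) : ℝ))|
        ≤ |(inner ℝ (v t) (v2 t) : ℝ)| + |(inner ℝ (v1 t) (v1 t) : ℝ)|
          + (|(inner ℝ (v1 t) (v1 t) : ℝ)| + |(inner ℝ (v2 t) (v t) : ℝ)|) := by
          refine le_trans (abs_add_le _ _) (add_le_add (abs_add_le _ _) (abs_add_le _ _))
      _ ≤ (9/8) * B + A * A + (A * A + B * (9/8)) := by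
          exact add_le_add (add_le_add i1 i2) (add_le_add i2 i3)
      _ = 2 * ((9/8) * B) + 2 * (A * A) := by ring
  have hcabs : |c| = 1/2 := by rw [hcdef]; norm_num
  have hc1abs : |c - 1| = 3/2 := by rw [hcdef]; norm_num
  -- coefficient bounds
  have Hcoef : ∀ t, |c * Q t ^ (c-1) * s t| ≤ (1/2) * (2 * (2 * ((9/8) * A))) := by
    intro t
    rw [abs_mul, abs_mul, hcabs, abs_of_nonneg (Enn (c-1) t)]
    have h1 : Q t ^ (c-1) * |s t| ≤ 2 * (2 * ((9/8) * A)) :=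
      mul_le_mul (E2 t) (S t) (abs_nonneg _) (by norm_num)
    calc 1/2 * Q t ^ (c-1) * |s t| = 1/2 * (Q t ^ (c-1) * |s t|) := by ring
      _ ≤ (1/2) * (2 * (2 * ((9/8) * A))) := by linarith
  have Kcoef : ∀ t, |c * (Q t ^ (c-1) * s2 t + ((c-1) * Q t ^ (c-1-1) * s t) * s t)|
      ≤ (1/2) * (2 * (2 * ((9/8) * B) + 2 * (A * A))
        + ((3/2) * 2 * (2 * ((9/8) * A))) * (2 * ((9/8) * A))) := by
    intro t
    rw [abs_mul, hcabs]
    apply mul_le_mul_of_nonneg_left _ (by norm_num : (0:ℝ) ≤ 1/2)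
    have t1 : |Q t ^ (c-1) * s2 t| ≤ 2 * (2 * ((9/8) * B) + 2 * (A * A)) := by
      rw [abs_mul, abs_of_nonneg (Enn (c-1) t)]
      exact mul_le_mul (E2 t) (S2 t) (abs_nonneg _) (by norm_num)
    have t2 : |((c-1) * Q t ^ (c-1-1) * s t) * s t|
        ≤ ((3/2) * 2 * (2 * ((9/8) * A))) * (2 * ((9/8) * A)) := by
      rw [abs_mul, abs_mul, abs_mul, hc1abs, abs_of_nonneg (Enn (c-1-1) t)]
      have u1 : Q t ^ (c-1-1) * |s t| ≤ 2 * (2 * ((9/8) * A)) :=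
        mul_le_mul (E3 t) (S t) (abs_nonneg _) (by norm_num)
      have u2 : (3/2) * (Q t ^ (c-1-1) * |s t|) ≤ (3/2) * (2 * (2 * ((9/8) * A))) := by
        linarith
      have u3 : (3/2) * Q t ^ (c-1-1) * |s t| ≤ (3/2) * 2 * (2 * ((9/8) * A)) := by
        calc (3/2) * Q t ^ (c-1-1) * |s t| = (3/2) * (Q t ^ (c-1-1) * |s t|) := by ring
          _ ≤ (3/2) * (2 * (2 * ((9/8) * A))) := u2
          _ = (3/2) * 2 * (2 * ((9/8) * A)) := by ring
      exact mul_le_mul u3 (S t) (abs_nonneg _) (by positivity)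
    calc |Q t ^ (c-1) * s2 t + ((c-1) * Q t ^ (c-1-1) * s t) * s t|
        ≤ |Q t ^ (c-1) * s2 t| + |((c-1) * Q t ^ (c-1-1) * s t) * s t| := abs_add_le _ _
      _ ≤ 2 * (2 * ((9/8) * B) + 2 * (A * A))
          + ((3/2) * 2 * (2 * ((9/8) * A))) * (2 * ((9/8) * A)) := add_le_add t1 t2
  refine ⟨hvne, hquasi, hτsm, ?_, ?_, ?_⟩
  · -- unit norm
    intro x
    rw [norm_smul, norm_inv, norm_norm]
    exact inv_mul_cancel₀ (norm_ne_zero_iff.2 (hvne x))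
  · -- first derivative bound
    intro x
    rw [(hτd x).deriv]
    have b1 : ‖(Q x ^ c) • v1 x‖ ≤ 2 * A := by
      rw [norm_smul, Real.norm_eq_abs, abs_of_nonneg (Enn c x)]
      exact mul_le_mul (E1 x) (hv1b x) (norm_nonneg _) (by norm_num)
    have b2 : ‖(c * Q x ^ (c-1) * s x) • v x‖
        ≤ ((1/2) * (2 * (2 * ((9/8) * A)))) * (9/8) := by
      rw [norm_smul, Real.norm_eq_abs]
      exact mul_le_mul (Hcoef x) (hvhi x) (norm_nonneg _) (by positivity)
    have hn := norm_add_le ((Q x ^ c) • v1 x) ((c * Q x ^ (c-1) * s x) • v x)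
    have key : ‖(Q x ^ c) • v1 x + (c * Q x ^ (c-1) * s x) • v x‖
        ≤ 2*A + ((1/2) * (2 * (2 * ((9/8) * A)))) * (9/8) :=
      le_trans hn (add_le_add b1 b2)
    refine le_trans key ?_
    rw [hCdef]
    have hsq : (1 + A + B)^2 = 1 + A^2 + B^2 + 2*A + 2*B + 2*(A*B) := by ring
    linarith [hsq, sq_nonneg A, sq_nonneg B, mul_nonneg hA0 hB0]
  · -- second derivative bound
    intro x
    rw [(hτdd x).deriv]
    have b1 : ‖(Q x ^ c) • v2 x‖ ≤ 2 * B := by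
      rw [norm_smul, Real.norm_eq_abs, abs_of_nonneg (Enn c x)]
      exact mul_le_mul (E1 x) (hv2b x) (norm_nonneg _) (by norm_num)
    have b2 : ‖(c * Q x ^ (c-1) * s x) • v1 x‖ ≤ ((1/2) * (2 * (2 * ((9/8) * A)))) * A := by
      rw [norm_smul, Real.norm_eq_abs]
      exact mul_le_mul (Hcoef x) (hv1b x) (norm_nonneg _) (by positivity)
    have b2' : ‖(c * Q x ^ (c-1) * s x) • v1 x‖ ≤ ((1/2) * (2 * (2 * ((9/8) * A)))) * A := b2
    have b3 : ‖(c * (Q x ^ (c-1) * s2 x + ((c-1) * Q x ^ (c-1-1) * s x) * s x)) • v x‖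
        ≤ ((1/2) * (2 * (2 * ((9/8) * B) + 2 * (A * A))
          + ((3/2) * 2 * (2 * ((9/8) * A))) * (2 * ((9/8) * A)))) * (9/8) := by
      rw [norm_smul, Real.norm_eq_abs]
      exact mul_le_mul (Kcoef x) (hvhi x) (norm_nonneg _) (by positivity)
    have t1 := norm_add_le ((Q x ^ c) • v2 x + (c * Q x ^ (c-1) * s x) • v1 x)
      ((c * Q x ^ (c-1) * s x) • v1 x
        + (c * (Q x ^ (c-1) * s2 x + ((c-1) * Q x ^ (c-1-1) * s x) * s x)) • v x)
    have t2 := norm_add_le ((Q x ^ c) • v2 x) ((c * Q x ^ (c-1) * s x) • v1 x)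
    have t3 := norm_add_le ((c * Q x ^ (c-1) * s x) • v1 x)
      ((c * (Q x ^ (c-1) * s2 x + ((c-1) * Q x ^ (c-1-1) * s x) * s x)) • v x)
    have key := le_trans t1 (add_le_add (le_trans t2 (add_le_add b1 b2))
      (le_trans t3 (add_le_add b2' b3)))
    refine le_trans key ?_
    rw [hCdef]
    have hsq : (1 + A + B)^2 = 1 + A^2 + B^2 + 2*A + 2*B + 2*(A*B) := by ring
    have hAA : A * A = A^2 := by ring
    linarith [hsq, hAA, sq_nonneg A, sq_nonneg B, mul_nonneg hA0 hB0]



end Main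

/-- Corollary 2.5: the unit tangent map `τ : ℝ/ℤ → S^{n−1}` of the
mollified curve is smooth and its first and second derivatives are bounded by a constant
`C = C(p, M)`. -/
theorem stmt_5 {n : ℕ} (p M : ℝ) (hp : 2 < p) (hM : 0 < M)
    (η : ℝ → ℝ) (hη : IsMollifier η) :
    ∃ ε > (0:ℝ), ∃ C > (0:ℝ), ∀ (γ γ₂ : ℝ → En n), IsW2p p 1 γ γ₂ → ArcLength γ →
      w1pNormD p 1 (deriv γ) γ₂ ≤ M →
      (∀ x, deriv (mollify η ε γ) x ≠ 0) ∧
      (∀ x, ‖‖deriv (mollify η ε γ) x‖⁻¹ • deriv (mollify η ε γ) x - deriv γ x‖ ≤ 1 / 4) ∧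
      ContDiff ℝ (⊤ : ℕ∞)
        (fun y => ‖deriv (mollify η ε γ) y‖⁻¹ • deriv (mollify η ε γ) y) ∧
      (∀ x, ‖‖deriv (mollify η ε γ) x‖⁻¹ • deriv (mollify η ε γ) x‖ = 1) ∧
      (∀ x, ‖deriv (fun y => ‖deriv (mollify η ε γ) y‖⁻¹ • deriv (mollify η ε γ) y) x‖
        ≤ C) ∧
      (∀ x, ‖deriv (deriv
          (fun y => ‖deriv (mollify η ε γ) y‖⁻¹ • deriv (mollify η ε γ) y)) x‖ ≤ C) := by
  exact stmt_5' p M hp hM η hη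
end
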